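/- For every ε with 0 < ε < 1, every γ > 1+ε, and every integer ℓ ≥ 1, set β = (1−ε)·γ. Then there exists a bipartite instance satisfying the β-ℓ-weak P-order and the γ-ℓ-weak C-order assumptions, together with: a maximal matching M' consisting of a single edge e = (p_1,c_1) such that w(e) ≥ w(p_1,c) for every c among the ℓ+1 first C-neighbors of p_1 in C-order and w(e) ≥ w(p,c_1) for every p among the ℓ+1 first P-neighbors of c_1 in P-order; and a matching M satisfying w(M) ≥ (2·max{1, β, γ}/(1+ε))·w(M'). (This exhibits instances on which the ℓ-Double-Greedy algorithm is no better than (2·max{1,β_ℓ,γ_ℓ})/(1+ε)-approximate.) -/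
import Mathlib


/-- A matching of a bipartite instance with edge set `E ⊆ P × C`. -/
def IsBipMatching {s q : ℕ} (E M : Finset (Fin s × Fin q)) : Prop :=
  M ⊆ E ∧ ∀ e₁ ∈ M, ∀ e₂ ∈ M, e₁ ≠ e₂ → e₁.1 ≠ e₂.1 ∧ e₁.2 ≠ e₂.2

/-- The βℓ-ℓ-weak P-order assumption. -/
def WeakPOrder {s q : ℕ} (E : Finset (Fin s × Fin q)) (w : Fin s × Fin q → ℝ)
    (ℓ : ℕ) (βℓ : ℝ) : Prop :=
  ∀ i j : Fin s, i < j → ∀ c : Fin q, (i, c) ∈ E → (j, c) ∈ E →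
    ℓ ≤ (Finset.univ.filter (fun x : Fin s => i < x ∧ x < j ∧ (x, c) ∈ E)).card →
    w (j, c) ≤ βℓ * w (i, c)

/-- The γℓ-ℓ-weak C-order assumption. -/
def WeakCOrder {s q : ℕ} (E : Finset (Fin s × Fin q)) (w : Fin s × Fin q → ℝ)
    (ℓ : ℕ) (γℓ : ℝ) : Prop :=
  ∀ i j : Fin q, i < j → ∀ p : Fin s, (p, i) ∈ E → (p, j) ∈ E →
    ℓ ≤ (Finset.univ.filter (fun x : Fin q => i < x ∧ x < j ∧ (p, x) ∈ E)).card →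
    w (p, j) ≤ γℓ * w (p, i)

/-- The C-neighbors of `p` in `E`. -/
def cNbrs {s q : ℕ} (E : Finset (Fin s × Fin q)) (p : Fin s) : Finset (Fin q) :=
  Finset.univ.filter (fun c : Fin q => (p, c) ∈ E)

/-- The ℓ+1 first C-neighbors of `p` in C-order. -/
def firstCNbrs {s q : ℕ} (E : Finset (Fin s × Fin q)) (ℓ : ℕ) (p : Fin s) : Finset (Fin q) :=
  (cNbrs E p).filter (fun c : Fin q => ((cNbrs E p).filter (fun c' : Fin q => c' < c)).card ≤ ℓ)

/-- The P-neighbors of `c` in `E`. -/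
def pNbrs {s q : ℕ} (E : Finset (Fin s × Fin q)) (c : Fin q) : Finset (Fin s) :=
  Finset.univ.filter (fun p : Fin s => (p, c) ∈ E)

/-- The ℓ+1 first P-neighbors of `c` in P-order. -/
def firstPNbrs {s q : ℕ} (E : Finset (Fin s × Fin q)) (ℓ : ℕ) (c : Fin q) : Finset (Fin s) :=
  (pNbrs E c).filter (fun p : Fin s => ((pNbrs E c).filter (fun p' : Fin s => p' < p)).card ≤ ℓ)

/-- Lower-bound instances for the ℓ-Double-Greedy algorithm: for every 0 < ε < 1, γ > 1+ε,
ℓ ≥ 1 and β = (1−ε)·γ, there is an instance satisfying the β-ℓ-weak P-order and γ-ℓ-weak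
C-order assumptions with a maximal matching `M' = {(p₁,c₁)}` whose single edge dominates the
ℓ+1 first C-neighbors of p₁ and the ℓ+1 first P-neighbors of c₁, and a matching `M` with
`w(M) ≥ (2·max{1,β,γ}/(1+ε))·w(M')`. -/
theorem stmt13 (ε γ : ℝ) (hε0 : 0 < ε) (hε1 : ε < 1) (hγ : 1 + ε < γ)
    (ℓ : ℕ) (hℓ : 1 ≤ ℓ) (β : ℝ) (hβ : β = (1 - ε) * γ) :
    ∃ (s q : ℕ) (hs : 0 < s) (hq : 0 < q) (E : Finset (Fin s × Fin q))
      (w : Fin s × Fin q → ℝ),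
      (∀ e ∈ E, 0 < w e) ∧ WeakPOrder E w ℓ β ∧ WeakCOrder E w ℓ γ ∧
      ∃ M' M : Finset (Fin s × Fin q),
        M' = {(⟨0, hs⟩, ⟨0, hq⟩)} ∧ IsBipMatching E M' ∧
        (∀ f ∈ E, ∃ g ∈ M', f.1 = g.1 ∨ f.2 = g.2) ∧
        (∀ c ∈ firstCNbrs E ℓ ⟨0, hs⟩, w (⟨0, hs⟩, c) ≤ w (⟨0, hs⟩, ⟨0, hq⟩)) ∧
        (∀ p ∈ firstPNbrs E ℓ ⟨0, hq⟩, w (p, ⟨0, hq⟩) ≤ w (⟨0, hs⟩, ⟨0, hq⟩)) ∧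
        IsBipMatching E M ∧
        (2 * max 1 (max β γ) / (1 + ε)) * ∑ e ∈ M', w e ≤ ∑ e ∈ M, w e := by
  have hγ0 : (0:ℝ) < γ := by linarith
  have hβ0 : (0:ℝ) < β := by rw [hβ]; nlinarith
  have hβγ : β ≤ γ := by rw [hβ]; nlinarith
  have hn : 0 < ℓ + 2 := by omega
  set n := ℓ + 2 with hndef
  set z : Fin n := ⟨0, hn⟩ with hz
  set L : Fin n := ⟨ℓ + 1, by omega⟩ with hL
  have hzL : z ≠ L := by simp [hz, hL, Fin.ext_iff]
  set E : Finset (Fin n × Fin n) := Finset.univ.filter (fun e => e.1 = z ∨ e.2 = z) with hE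
  set w : Fin n × Fin n → ℝ :=
    fun e => if e = (z, L) then γ else if e = (L, z) then β else 1 with hw
  have hmemE : ∀ e : Fin n × Fin n, e ∈ E ↔ (e.1 = z ∨ e.2 = z) := by
    intro e; simp [hE]
  -- card bound for the intermediate filter
  have hcard : ∀ (i j : Fin n) (P : Fin n → Prop) [DecidablePred P],
      (Finset.univ.filter (fun x : Fin n => i < x ∧ x < j ∧ P x)).card ≤ j.val - i.val - 1 := by
    intro i j P _
    calc (Finset.univ.filter (fun x : Fin n => i < x ∧ x < j ∧ P x)).card
        ≤ (Finset.Ioo i j).card := by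
          apply Finset.card_le_card
          intro x hx
          simp only [Finset.mem_filter, Finset.mem_univ, true_and] at hx
          simp [Finset.mem_Ioo, hx.1, hx.2.1]
      _ = j.val - i.val - 1 := Fin.card_Ioo i j
  refine ⟨n, n, hn, hn, E, w, ?_, ?_, ?_, {(z, z)}, {(z, L), (L, z)}, rfl, ?_, ?_, ?_, ?_, ?_, ?_⟩
  · -- positivity
    intro e _
    simp only [hw]
    split_ifs <;> linarith
  · -- WeakPOrder
    intro i j hij c hiE hjE hcardℓ
    have hc : c = z := by
      rcases (hmemE _).1 hiE with h | h
      · rcases (hmemE _).1 hjE with h' | h'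
        · exact absurd (h.trans h'.symm) (ne_of_lt hij)
        · exact h'
      · exact h
    subst hc
    have h1 := hcard i j (fun x => (x, z) ∈ E)
    have hjlt : j.val < n := j.isLt
    have hi0 : i.val = 0 ∧ j.val = ℓ + 1 := by omega
    have hiz : i = z := by apply Fin.ext; exact hi0.1
    have hjL : j = L := by apply Fin.ext; exact hi0.2
    subst hiz; subst hjL
    have h1 : w (L, z) = β := by simp [hw, Prod.ext_iff, hzL, hzL.symm]
    have h2 : w (z, z) = 1 := by simp [hw, Prod.ext_iff, hzL, hzL.symm]
    rw [h1, h2]; linarith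
  · -- WeakCOrder
    intro i j hij p hiE hjE hcardℓ
    have hp : p = z := by
      rcases (hmemE _).1 hiE with h | h
      · exact h
      · rcases (hmemE _).1 hjE with h' | h'
        · exact h'
        · exact absurd (h.trans h'.symm) (ne_of_lt hij)
    subst hp
    have h1 := hcard i j (fun x => (z, x) ∈ E)
    have hjlt : j.val < n := j.isLt
    have hi0 : i.val = 0 ∧ j.val = ℓ + 1 := by omega
    have hiz : i = z := by apply Fin.ext; exact hi0.1
    have hjL : j = L := by apply Fin.ext; exact hi0.2
    subst hiz; subst hjL
    have h1 : w (z, L) = γ := by simp [hw]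
    have h2 : w (z, z) = 1 := by simp [hw, Prod.ext_iff, hzL, hzL.symm]
    rw [h1, h2]; linarith
  · -- M' matching
    constructor
    · intro e he
      simp only [Finset.mem_singleton] at he
      rw [hmemE, he]; left; rfl
    · intro e₁ h₁ e₂ h₂ hne
      simp only [Finset.mem_singleton] at h₁ h₂
      exact absurd (h₁.trans h₂.symm) hne
  · -- maximality
    intro f hf
    exact ⟨(z, z), Finset.mem_singleton_self _, (hmemE f).1 hf⟩
  · -- firstCNbrs domination
    intro c hc
    have hcn : cNbrs E z = Finset.univ := by
      ext x; simp [cNbrs, hmemE]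
    rw [firstCNbrs, hcn] at hc
    simp only [Finset.mem_filter, Finset.mem_univ, true_and] at hc
    have : Finset.univ.filter (fun c' : Fin n => c' < c) = Finset.Iio c := by
      ext x; simp [Finset.mem_Iio]
    rw [this, Fin.card_Iio] at hc
    have hcL : c ≠ L := by
      intro h; rw [h] at hc; simp [hL] at hc
    have hA : (z, c) ≠ (z, L) := fun h => hcL (congrArg Prod.snd h)
    have hB : (z, c) ≠ (L, z) := fun h => hzL (congrArg Prod.fst h)
    have : w (z, c) = 1 := by simp [hw, hA, hB]
    rw [this]
    have : w (z, z) = 1 := by simp [hw, Prod.ext_iff, hzL, hzL.symm]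
    rw [this]
  · -- firstPNbrs domination
    intro p hp
    have hpn : pNbrs E z = Finset.univ := by
      ext x; simp [pNbrs, hmemE]
    rw [firstPNbrs, hpn] at hp
    simp only [Finset.mem_filter, Finset.mem_univ, true_and] at hp
    have : Finset.univ.filter (fun p' : Fin n => p' < p) = Finset.Iio p := by
      ext x; simp [Finset.mem_Iio]
    rw [this, Fin.card_Iio] at hp
    have hpL : p ≠ L := by
      intro h; rw [h] at hp; simp [hL] at hp
    have hA : (p, z) ≠ (z, L) := fun h => hzL (congrArg Prod.snd h)
    have hB : (p, z) ≠ (L, z) := fun h => hpL (congrArg Prod.fst h)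
    have : w (p, z) = 1 := by simp [hw, hA, hB]
    rw [this]
    have : w (z, z) = 1 := by simp [hw, Prod.ext_iff, hzL, hzL.symm]
    rw [this]
  · -- M matching
    constructor
    · intro e he
      simp only [Finset.mem_insert, Finset.mem_singleton] at he
      rcases he with h | h <;> rw [hmemE, h]
      · left; rfl
      · right; rfl
    · intro e₁ h₁ e₂ h₂ hne
      simp only [Finset.mem_insert, Finset.mem_singleton] at h₁ h₂
      rcases h₁ with h₁ | h₁ <;> rcases h₂ with h₂ | h₂ <;>
        first
          | exact absurd (h₁.trans h₂.symm) hne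
          | (subst h₁; subst h₂; exact ⟨hzL, hzL.symm⟩)
          | (subst h₁; subst h₂; exact ⟨hzL.symm, hzL⟩)
  · -- weight inequality
    have hne : (z, L) ≠ (L, z) := by
      intro h; exact hzL (congrArg Prod.fst h)
    rw [Finset.sum_singleton, Finset.sum_insert (by simpa using hne),
      Finset.sum_singleton]
    have h1 : w (z, z) = 1 := by simp [hw, Prod.ext_iff, hzL, hzL.symm]
    have h2 : w (z, L) = γ := by simp [hw]
    have h3 : w (L, z) = β := by simp [hw, Prod.ext_iff, hzL, hzL.symm]
    rw [h1, h2, h3, mul_one]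
    have hmax : max 1 (max β γ) = γ := by
      rw [max_eq_right hβγ, max_eq_right (by linarith)]
    rw [hmax, div_le_iff₀ (by linarith)]
    rw [hβ]; nlinarith
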